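/- For every integer n ≥ 0, the weighted Genocchi number f(n) := ∑_{s̄} H(s̄)·G(s̄), where the sum is over all pivoting-equivalence classes s̄ of complete binary trees with 2n+1 vertices and G(s̄) := (n+1)·T(s̄)/2^{2n}, satisfies f(n) = (1·3·5⋯(2n-1))^2 · (2n+1) = (2n-1)!!·(2n+1)!!. -/

import Mathlib

/-- Binary trees: every vertex has an ordered pair of (possibly empty) subtrees.
`nil` is the empty tree; vertices are the `node` constructors. -/
inductive BTree : Type
  | nil : BTree
  | node : BTree → BTree → BTree
deriving DecidableEq

/-- The number of vertices of a binary tree. -/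
def BTree.size : BTree → ℕ
  | .nil => 0
  | .node l r => 1 + l.size + r.size

/-- The product of the hook lengths of all vertices of a binary tree, where the
hook length of a vertex is the number of its descendants (including itself). -/
def BTree.hookProd : BTree → ℕ
  | .nil => 1
  | .node l r => (BTree.node l r).size * l.hookProd * r.hookProd

/-- A binary tree is complete if for every vertex the two subtrees are either
both empty or both nonempty. -/
inductive BTree.Complete : BTree → Prop
  | nil : BTree.Complete .nil
  | leaf : BTree.Complete (.node .nil .nil)
  | node {l r : BTree} : l ≠ .nil → r ≠ .nil → l.Complete → r.Complete →
      BTree.Complete (.node l r)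

/-- A basic pivoting: the exchange of the two subtrees of a non-leaf vertex. -/
inductive BTree.Pivot : BTree → BTree → Prop
  | swap {l r : BTree} : l ≠ .nil → r ≠ .nil → BTree.Pivot (.node l r) (.node r l)
  | left {l l' : BTree} (r : BTree) : BTree.Pivot l l' →
      BTree.Pivot (.node l r) (.node l' r)
  | right (l : BTree) {r r' : BTree} : BTree.Pivot r r' →
      BTree.Pivot (.node l r) (.node l r')

/-- Two binary trees are pivoting-equivalent if one is obtained from the other by a
finite sequence of basic pivotings. -/
def BTree.PivotEquiv : BTree → BTree → Prop := Relation.ReflTransGen BTree.Pivot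

/-- Labelled binary trees: every vertex carries a natural number label. -/
inductive LBTree : Type
  | nil : LBTree
  | node : ℕ → LBTree → LBTree → LBTree

/-- The underlying (unlabelled) shape of a labelled binary tree. -/
def LBTree.shape : LBTree → BTree
  | .nil => .nil
  | .node _ l r => .node l.shape r.shape

/-- The multiset of labels of a labelled binary tree. -/
def LBTree.labels : LBTree → Multiset ℕ
  | .nil => 0
  | .node a l r => a ::ₘ (l.labels + r.labels)

/-- A labelled binary tree is increasing if the label of each vertex is smaller
than the labels of all its descendants. -/
inductive LBTree.Increasing : LBTree → Prop
  | nil : LBTree.Increasing .nil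
  | node {a : ℕ} {l r : LBTree} :
      (∀ b ∈ l.labels, a < b) → (∀ b ∈ r.labels, a < b) →
      l.Increasing → r.Increasing → LBTree.Increasing (.node a l r)

/-- `lcount s` is the number of increasing labellings of the binary tree `s`
by the labels `{1, …, size s}`. -/
noncomputable def lcount (s : BTree) : ℕ :=
  {l : LBTree | l.shape = s ∧
      l.labels = Multiset.map (· + 1) (Multiset.range s.size) ∧
      l.Increasing}.ncard

/-- `Tbar s` is the total number of increasing labelled binary trees whose shape is
pivoting-equivalent to `s`, i.e. `T(s̄) = ∑_{s' ∈ s̄} #L(s')`. -/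
noncomputable def Tbar (s : BTree) : ℕ :=
  ∑ᶠ s' ∈ {s' | BTree.PivotEquiv s s'}, lcount s'

deriving instance DecidableEq for LBTree

/-- Recursive count of increasing labellings of a binary tree shape. -/
def fcount : BTree → ℕ
  | .nil => 1
  | .node l r => (l.size + r.size).choose l.size * fcount l * fcount r

/-- The finset of increasing labelled trees of shape `s` with label set `A`. -/
def LTfin : BTree → Finset ℕ → Finset LBTree
  | .nil, A => if A = ∅ then {LBTree.nil} else ∅
  | .node l r, A =>
    if h : A.Nonempty then
      ((A.erase (A.min' h)).powersetCard l.size).biUnion fun S =>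
        ((LTfin l S) ×ˢ (LTfin r ((A.erase (A.min' h)) \ S))).image
          fun p => LBTree.node (A.min' h) p.1 p.2
    else ∅

lemma labels_card (t : LBTree) : Multiset.card t.labels = t.shape.size := by
  induction t with
  | nil => rfl
  | node a l r ihl ihr =>
      simp only [LBTree.labels, LBTree.shape, BTree.size, Multiset.card_cons,
        Multiset.card_add, ihl, ihr]
      omega

lemma mem_LT {s : BTree} {A : Finset ℕ} {t : LBTree} :
    t ∈ LTfin s A ↔ t.shape = s ∧ t.labels = A.val ∧ t.Increasing := by
  induction s generalizing A t with
  | nil =>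
      rw [LTfin]
      constructor
      · intro h
        split at h
        · simp only [Finset.mem_singleton] at h
          subst h
          subst ‹A = ∅›
          exact ⟨rfl, rfl, LBTree.Increasing.nil⟩
        · simp at h
      · rintro ⟨hs, hl, _⟩
        cases t with
        | nil =>
            have : A = ∅ := by
              apply Finset.val_injective
              simpa [LBTree.labels] using hl.symm
            simp [this]
        | node a l r => simp [LBTree.shape] at hs
  | node l r ihl ihr =>
      rw [LTfin]
      constructor
      · intro h
        split at h
        case isFalse => simp at h
        case isTrue hA =>
          simp only [Finset.mem_biUnion, Finset.mem_image, Finset.mem_product,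
            Finset.mem_powersetCard, Prod.exists] at h
          obtain ⟨S, ⟨hSsub, hScard⟩, tl, tr, ⟨htl, htr⟩, ht⟩ := h
          subst ht
          obtain ⟨hsl, hll, hil⟩ := ihl.mp htl
          obtain ⟨hsr, hlr, hir⟩ := ihr.mp htr
          set m := A.min' hA with hm
          have hmem : m ∈ A := A.min'_mem hA
          have hSle : S.val ≤ (A.erase m).val := Finset.val_le_iff.mpr hSsub
          have hsum : S.val + ((A.erase m) \ S).val = (A.erase m).val := by
            rw [Finset.sdiff_val, add_tsub_cancel_of_le hSle]
          have hAval : A.val = m ::ₘ (A.erase m).val := by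
            rw [Finset.erase_val, Multiset.cons_erase (Finset.mem_val.mpr hmem)]
          have hlt : ∀ b ∈ (A.erase m).val, m < b := by
            intro b hb
            rw [Finset.mem_val, Finset.mem_erase] at hb
            exact lt_of_le_of_ne (A.min'_le b hb.2) (Ne.symm hb.1)
          refine ⟨by simp [LBTree.shape, hsl, hsr], ?_, ?_⟩
          · show m ::ₘ (tl.labels + tr.labels) = A.val
            rw [hll, hlr, hsum, hAval]
          · refine LBTree.Increasing.node ?_ ?_ hil hir
            · intro b hb
              apply hlt
              rw [hll] at hb
              exact Multiset.le_iff_subset (by exact S.nodup) |>.mp hSle hb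
            · intro b hb
              apply hlt
              rw [hlr] at hb
              refine Multiset.subset_of_le ?_ hb
              rw [← hsum]; exact self_le_add_left _ _
      · rintro ⟨hs, hl, hi⟩
        cases t with
        | nil => simp [LBTree.shape] at hs
        | node a tl tr =>
          simp only [LBTree.shape, BTree.node.injEq] at hs
          obtain ⟨hsl, hsr⟩ := hs
          have hl' : a ::ₘ (tl.labels + tr.labels) = A.val := hl
          have haA : a ∈ A := by
            rw [← Finset.mem_val, ← hl']; exact Multiset.mem_cons_self _ _
          have hA : A.Nonempty := ⟨a, haA⟩
          cases hi with
          | node h1 h2 il ir =>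
          have hmin : A.min' hA = a := by
            have h3 : A.min' hA ∈ A.val := Finset.mem_val.mpr (A.min'_mem hA)
            rw [← hl', Multiset.mem_cons] at h3
            rcases h3 with h3 | h3
            · exact h3
            · exfalso
              rw [Multiset.mem_add] at h3
              have hlt : a < A.min' hA := by
                rcases h3 with h3 | h3
                · exact h1 _ h3
                · exact h2 _ h3
              have := A.min'_le a haA
              omega
          have hX : tl.labels + tr.labels = (A.erase a).val := by
            rw [Finset.erase_val, ← hl', Multiset.erase_cons_head]
          have hnd : (tl.labels + tr.labels).Nodup := hX ▸ (A.erase a).nodup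
          have hndl : tl.labels.Nodup := Multiset.nodup_of_le (self_le_add_right _ _) hnd
          set S : Finset ℕ := ⟨tl.labels, hndl⟩ with hS
          have hSval : S.val = tl.labels := rfl
          have hSsub : S ⊆ A.erase a := by
            rw [← Finset.val_le_iff, hSval, ← hX]
            exact self_le_add_right _ _
          have hScard : S.card = l.size := by
            show Multiset.card tl.labels = l.size
            rw [labels_card, hsl]
          have htl : tl ∈ LTfin l S := ihl.mpr ⟨hsl, rfl, il⟩
          have htr : tr ∈ LTfin r ((A.erase a) \ S) := by
            refine ihr.mpr ⟨hsr, ?_, ir⟩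
            rw [Finset.sdiff_val, hSval, ← hX, add_tsub_cancel_left]
          rw [dif_pos hA]
          simp only [Finset.mem_biUnion, Finset.mem_image, Finset.mem_product,
            Finset.mem_powersetCard, Prod.exists]
          refine ⟨S, ⟨by rw [hmin]; exact hSsub, hScard⟩, tl, tr,
            ⟨htl, by rw [hmin]; exact htr⟩, by rw [hmin]⟩

lemma card_LT (s : BTree) : ∀ (A : Finset ℕ), A.card = s.size → (LTfin s A).card = fcount s := by
  induction s with
  | nil =>
      intro A hA
      rw [Finset.card_eq_zero.mp hA]
      rw [LTfin]; simp [fcount]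
  | node l r ihl ihr =>
      intro A hA
      have hA' : A.Nonempty := by
        rw [← Finset.card_pos, hA, BTree.size]; omega
      set m := A.min' hA' with hm
      have hcardE : (A.erase m).card = l.size + r.size := by
        rw [Finset.card_erase_of_mem (A.min'_mem hA'), hA]
        show 1 + l.size + r.size - 1 = _
        omega
      rw [LTfin, dif_pos hA']
      rw [Finset.card_biUnion]
      · have hterm : ∀ S ∈ (A.erase m).powersetCard l.size,
            (((LTfin l S) ×ˢ (LTfin r ((A.erase m) \ S))).image
              fun p => LBTree.node m p.1 p.2).card = fcount l * fcount r := by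
          intro S hS
          rw [Finset.mem_powersetCard] at hS
          rw [Finset.card_image_of_injective _
              (fun p q h => by cases p; cases q; simpa using h)]
          have hc2 : ((A.erase m) \ S).card = r.size := by
            rw [Finset.card_sdiff_of_subset hS.1, hcardE, hS.2]
            omega
          rw [Finset.card_product, ihl S hS.2, ihr _ hc2]
        rw [Finset.sum_congr rfl hterm, Finset.sum_const, Finset.card_powersetCard, hcardE]
        show _ = (l.size + r.size).choose l.size * fcount l * fcount r
        simp [mul_assoc]
      · intro S hS S' hS' hne
        simp only [Finset.disjoint_left]
        intro x hx hx'
        simp only [Finset.mem_image, Finset.mem_product, Prod.exists] at hx hx'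
        obtain ⟨p1, p2, ⟨hp1, hp2⟩, hpx⟩ := hx
        obtain ⟨q1, q2, ⟨hq1, hq2⟩, hqx⟩ := hx'
        apply hne
        have hpq : p1 = q1 := by
          rw [← hpx] at hqx
          simp only [LBTree.node.injEq] at hqx
          exact hqx.2.1.symm
        have e1 : p1.labels = S.val := (mem_LT.mp hp1).2.1
        have e2 : q1.labels = S'.val := (mem_LT.mp hq1).2.1
        apply Finset.val_injective
        rw [← e1, ← e2, hpq]

lemma lcount_eq (s : BTree) : lcount s = fcount s := by
  classical
  have hinj : Function.Injective (· + 1 : ℕ → ℕ) := fun a b h => by simpa using h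
  have hset : {t : LBTree | t.shape = s ∧
      t.labels = Multiset.map (· + 1) (Multiset.range s.size) ∧ t.Increasing}
      = ↑(LTfin s ((Finset.range s.size).map ⟨(· + 1), hinj⟩)) := by
    ext t
    simp only [Finset.coe_sort_coe, Set.mem_setOf_eq, Finset.mem_coe, mem_LT,
      Finset.map_val, Finset.range_val]
    rfl
  rw [lcount, hset, Set.ncard_coe_finset]
  apply card_LT
  rw [Finset.card_map, Finset.card_range]

lemma hook_lcount (s : BTree) : s.hookProd * lcount s = (s.size).factorial := by
  induction s with
  | nil => simp [BTree.hookProd, BTree.size, lcount_eq, fcount]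
  | node l r ihl ihr =>
      rw [lcount_eq] at *
      show (1 + l.size + r.size) * l.hookProd * r.hookProd *
        ((l.size + r.size).choose l.size * fcount l * fcount r) = _
      have key : (l.size + r.size).choose l.size * (l.size).factorial * (r.size).factorial
          = (l.size + r.size).factorial := by
        have := Nat.choose_mul_factorial_mul_factorial (Nat.le_add_right l.size r.size)
        simpa using this
      have hsz : (BTree.node l r).size = l.size + r.size + 1 := by
        show 1 + l.size + r.size = _; omega
      rw [hsz, Nat.factorial_succ, ← key, ← ihl, ← ihr]
      ring

/-- Encoding of `Tree Unit` (internal structure) as complete binary trees. -/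
def ctree : Tree Unit → BTree
  | BinaryTree.nil => BTree.node BTree.nil BTree.nil
  | BinaryTree.node _ a b => BTree.node (ctree a) (ctree b)

lemma ctree_ne_nil (x : Tree Unit) : ctree x ≠ BTree.nil := by
  cases x <;> simp [ctree]

lemma ctree_inj : Function.Injective ctree := by
  intro x
  induction x with
  | nil =>
      intro y h
      cases y with
      | nil => rfl
      | node u a b =>
          simp only [ctree, BTree.node.injEq] at h
          exact absurd h.1.symm (ctree_ne_nil a)
  | node u a b iha ihb =>
      intro y h
      cases y with
      | nil =>
          simp only [ctree, BTree.node.injEq] at h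
          exact absurd h.1 (ctree_ne_nil a)
      | node u' a' b' =>
          simp only [ctree, BTree.node.injEq] at h
          rw [iha h.1, ihb h.2]

lemma ctree_complete (x : Tree Unit) : (ctree x).Complete := by
  induction x with
  | nil => exact BTree.Complete.leaf
  | node u a b iha ihb =>
      exact BTree.Complete.node (ctree_ne_nil a) (ctree_ne_nil b) iha ihb

lemma ctree_size (x : Tree Unit) : (ctree x).size = 2 * BinaryTree.numNodes x + 1 := by
  induction x with
  | nil => simp [ctree, BTree.size, BinaryTree.numNodes]
  | node u a b iha ihb =>
      simp only [ctree, BTree.size, BinaryTree.numNodes, iha, ihb]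
      omega

lemma complete_in_range {s : BTree} (h : s.Complete) :
    s = BTree.nil ∨ ∃ x : Tree Unit, ctree x = s := by
  induction h with
  | nil => exact Or.inl rfl
  | leaf => exact Or.inr ⟨BinaryTree.nil, rfl⟩
  | node hl hr hcl hcr ihl ihr =>
      rcases ihl with h | ⟨xl, hxl⟩
      · exact absurd h hl
      rcases ihr with h | ⟨xr, hxr⟩
      · exact absurd h hr
      exact Or.inr ⟨BinaryTree.node () xl xr, by rw [ctree, hxl, hxr]⟩

lemma complete_set_eq (n : ℕ) :
    {s : BTree | s.Complete ∧ s.size = 2 * n + 1}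
      = ↑((BinaryTree.treesOfNumNodesEq n).map ⟨ctree, ctree_inj⟩) := by
  ext s
  simp only [Set.mem_setOf_eq, Finset.coe_map, Set.mem_image, Finset.mem_coe,
    Function.Embedding.coeFn_mk, BinaryTree.mem_treesOfNumNodesEq]
  constructor
  · rintro ⟨hc, hsz⟩
    rcases complete_in_range hc with h | ⟨x, hx⟩
    · subst h; simp [BTree.size] at hsz
    · refine ⟨x, ?_, hx⟩
      have := ctree_size x
      rw [hx, hsz] at this
      omega
  · rintro ⟨x, hn, hx⟩
    subst hx
    exact ⟨ctree_complete x, by rw [ctree_size, hn]⟩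

lemma dfac_fac (n : ℕ) : (2 * n).factorial = 2 ^ n * n.factorial * (2 * n - 1).doubleFactorial := by
  cases n with
  | zero => simp
  | succ m =>
      have h : 2 * (m + 1) = (2 * m + 1) + 1 := by omega
      rw [h]
      rw [Nat.factorial_eq_mul_doubleFactorial (2 * m + 1)]
      have h2 : 2 * m + 1 + 1 = 2 * (m + 1) := by omega
      have h3 : 2 * (m + 1) - 1 = 2 * m + 1 := by omega
      rw [h2, h3, Nat.doubleFactorial_two_mul]

lemma choose_eq_pow_dfac (n : ℕ) :
    (2 * n).choose n * n.factorial = 2 ^ n * (2 * n - 1).doubleFactorial := by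
  have key : (2 * n).choose n * n.factorial * n.factorial
      = (2 ^ n * (2 * n - 1).doubleFactorial) * n.factorial := by
    have h1 := Nat.choose_mul_factorial_mul_factorial (show n ≤ 2 * n by omega)
    have h2 : 2 * n - n = n := by omega
    rw [h2] at h1
    rw [h1, dfac_fac]
    ring
  exact Nat.eq_of_mul_eq_mul_right (Nat.factorial_pos n) key

/-- The weighted Genocchi number `f n = ∑_{s̄} H(s̄) * G(s̄)`, where the sum runs over
all pivoting-equivalence classes of complete binary trees with `2n+1` vertices and
`G(s̄) = (n+1) * T(s̄) / 2 ^ (2n)`, equals `(2n-1)‼ * (2n+1)‼`.  Summing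
`H(s̄) * T(s̄)` over all classes amounts to summing `H(s) * #L(s)` over all complete
binary trees `s` with `2n+1` vertices, so the identity is stated in the multiplied
form `2 ^ (2n) * f n = (n+1) * ∑_s H(s) * #L(s)`. -/
theorem weighted_genocchi (n : ℕ) :
    (n + 1) * ∑ᶠ s ∈ {s : BTree | s.Complete ∧ s.size = 2 * n + 1}, s.hookProd * lcount s =
      2 ^ (2 * n) * (Nat.doubleFactorial (2 * n - 1) * Nat.doubleFactorial (2 * n + 1)) := by
  rw [complete_set_eq, finsum_mem_coe_finset]
  have hterm : ∀ s ∈ (BinaryTree.treesOfNumNodesEq n).map ⟨ctree, ctree_inj⟩,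
      s.hookProd * lcount s = (2 * n + 1).factorial := by
    intro s hs
    simp only [Finset.mem_map, Function.Embedding.coeFn_mk, BinaryTree.mem_treesOfNumNodesEq] at hs
    obtain ⟨x, hx, rfl⟩ := hs
    rw [hook_lcount, ctree_size, hx]
  rw [Finset.sum_congr rfl hterm, Finset.sum_const, Finset.card_map,
    BinaryTree.treesOfNumNodesEq_card_eq_catalan, smul_eq_mul, ← mul_assoc,
    succ_mul_catalan_eq_centralBinom]
  have hc : Nat.centralBinom n = (2 * n).choose n := rfl
  rw [hc]
  have h1 : (2 * n + 1).factorial = (2 * n + 1).doubleFactorial * (2 ^ n * n.factorial) := by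
    rw [Nat.factorial_eq_mul_doubleFactorial (2 * n), Nat.doubleFactorial_two_mul]
  rw [h1]
  have h2 := choose_eq_pow_dfac n
  calc (2 * n).choose n * ((2 * n + 1).doubleFactorial * (2 ^ n * n.factorial))
      = ((2 * n).choose n * n.factorial) * 2 ^ n * (2 * n + 1).doubleFactorial := by ring
    _ = (2 ^ n * (2 * n - 1).doubleFactorial) * 2 ^ n * (2 * n + 1).doubleFactorial := by
        rw [h2]
    _ = 2 ^ (2 * n) * ((2 * n - 1).doubleFactorial * (2 * n + 1).doubleFactorial) := by
        rw [two_mul, pow_add]; ring
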